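/- Let A be an integral domain and R = A[x]. Suppose I = (f, g) is an ideal of R generated by two elements f ∈ A and g = c·x^β with c ∈ A, β ≥ 1, such that the vanishing locus of I is contained in the locus x = 0, i.e., x lies in the radical of I. Then the image of c in A/(f) is a unit, and hence I = (f, x^β). -/

import Mathlib

open Polynomial

/-- Let `A` be an integral domain, `R = A[x]`, `f ∈ A`, `g = c·x^β` with
`c ∈ A` and `β ≥ 1`, and `I = (f, g)`.  If the vanishing locus of `I` is contained in
the locus `x = 0`, i.e. `x ∈ √I`, then the image of `c` in `A/(f)` is a unit, and hence
`I = (f, x^β)`. -/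
theorem unit_coefficient_of_x_in_radical
    (A : Type*) [CommRing A] [IsDomain A] (f c : A) (β : ℕ) (hβ : 1 ≤ β)
    (hx : (X : A[X]) ∈ (Ideal.span ({C f, C c * X ^ β} : Set A[X])).radical) :
    IsUnit (Ideal.Quotient.mk (Ideal.span {f}) c) ∧
      Ideal.span ({C f, C c * X ^ β} : Set A[X]) =
        Ideal.span ({C f, X ^ β} : Set A[X]) := by
  set π := Ideal.Quotient.mk (Ideal.span ({f} : Set A))
  -- Part 1: the image of c in A/(f) is a unit
  have hunit : IsUnit (π c) := by
    obtain ⟨n, hn⟩ := hx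
    rw [Ideal.mem_span_pair] at hn
    obtain ⟨p, q, hpq⟩ := hn
    -- map the identity to (A/(f))[X]
    have hmap := congrArg (Polynomial.map π) hpq
    have hf0 : π f = 0 := by
      simp [π, Ideal.Quotient.eq_zero_iff_mem, Ideal.mem_span_singleton]
    simp only [Polynomial.map_add, Polynomial.map_mul, Polynomial.map_pow,
      Polynomial.map_C, Polynomial.map_X, hf0, map_zero, C_0, mul_zero, zero_add] at hmap
    -- hmap : (map π q) * (C (π c) * X ^ β) = X ^ n
    have hco := congrArg (fun r => Polynomial.coeff r n) hmap
    rw [show (Polynomial.map π q) * (C (π c) * X ^ β)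
          = ((Polynomial.map π q) * C (π c)) * X ^ β by ring,
      Polynomial.coeff_mul_X_pow', Polynomial.coeff_X_pow] at hco
    by_cases hβn : β ≤ n
    · rw [if_pos hβn, if_pos rfl, Polynomial.coeff_mul_C] at hco
      exact IsUnit.of_mul_eq_one _ (by rw [mul_comm]; exact hco)
    · rw [if_neg hβn, if_pos rfl] at hco
      haveI : Subsingleton (A ⧸ Ideal.span ({f} : Set A)) :=
        subsingleton_of_zero_eq_one hco
      exact isUnit_of_subsingleton _
  refine ⟨hunit, ?_⟩
  -- Part 2: the ideals coincide
  obtain ⟨u, hu⟩ := hunit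
  obtain ⟨d, hd⟩ := Ideal.Quotient.mk_surjective (↑u⁻¹ : A ⧸ Ideal.span ({f} : Set A))
  have hcd : π (c * d) = 1 := by
    rw [map_mul, ← hu, hd]
    exact u.mul_inv
  have hfa : f ∣ (c * d - 1) := by
    rw [← Ideal.mem_span_singleton]
    rw [← Ideal.Quotient.eq_zero_iff_mem (I := Ideal.span ({f} : Set A))]
    rw [map_sub, map_one, sub_eq_zero]; exact hcd
  obtain ⟨a, ha⟩ := hfa
  apply le_antisymm <;> rw [Ideal.span_le] <;> intro r hr <;>
    simp only [Set.mem_insert_iff, Set.mem_singleton_iff] at hr <;>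
    rcases hr with rfl | rfl
  · exact Ideal.subset_span (by simp)
  · rw [SetLike.mem_coe, Ideal.mem_span_pair]
    exact ⟨0, C c, by ring⟩
  · exact Ideal.subset_span (by simp)
  · rw [SetLike.mem_coe, Ideal.mem_span_pair]
    have key : c * d - f * a = 1 := by linear_combination ha
    have hkey := congrArg (fun t : A => C t * (X : A[X]) ^ β) key
    simp only [map_sub, map_mul, map_one, one_mul] at hkey
    exact ⟨-(C a * X ^ β), C d, by linear_combination hkey⟩
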